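/- A frame Φ = (φ₁, ..., φₙ) in ℂᵈ defines injective phase retrieval measurements (i.e., for all x, y ∈ ℂᵈ, if φₖ* x x* φₖ = φₖ* y y* φₖ for all k then x x* = y y*) if and only if the real linear space L_Φ = {Q Hermitian d×d : φₖ* Q φₖ = 0 for all k} contains no nonzero Hermitian matrix of rank at most 2. -/

import Mathlib

open Matrix

namespace PhaseRetrievalAux

variable {d : ℕ}

lemma meas_vecMulVec (x φ : Fin d → ℂ) :
    star φ ⬝ᵥ (vecMulVec x (star x)).mulVec φ
      = ((Complex.normSq (star x ⬝ᵥ φ) : ℝ) : ℂ) := by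
  have : star φ ⬝ᵥ (vecMulVec x (star x)).mulVec φ
      = (star x ⬝ᵥ φ) * (starRingEnd ℂ) (star x ⬝ᵥ φ) := by
    simp only [dotProduct, mulVec, vecMulVec_apply, Pi.star_apply, Complex.star_def,
      map_sum, _root_.map_mul, Complex.conj_conj, Finset.mul_sum, Finset.sum_mul]
    refine Finset.sum_congr rfl fun a _ => Finset.sum_congr rfl fun b _ => ?_
    ring
  rw [this, Complex.mul_conj]

lemma vecMulVec_isHermitian (x : Fin d → ℂ) : (vecMulVec x (star x)).IsHermitian := by
  ext a b
  simp only [conjTranspose_apply, vecMulVec_apply, Pi.star_apply, star_mul', star_star]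
  exact mul_comm _ _

lemma rank_vecMulVec_le (z w : Fin d → ℂ) : (vecMulVec z w).rank ≤ 1 := by
  rw [vecMulVec_eq (Fin 1)]
  exact (rank_mul_le_left _ _).trans ((rank_le_card_width _).trans_eq (by simp))

lemma rank_sub_le' (A B : Matrix (Fin d) (Fin d) ℂ) : (A - B).rank ≤ A.rank + B.rank := by
  have hle : LinearMap.range (A - B).mulVecLin
      ≤ LinearMap.range A.mulVecLin ⊔ LinearMap.range B.mulVecLin := by
    rintro w ⟨v, rfl⟩
    have h : (A - B).mulVecLin v = A.mulVecLin v - B.mulVecLin v := by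
      simp [mulVecLin_apply, sub_mulVec]
    rw [h]
    exact Submodule.sub_mem _ (Submodule.mem_sup_left ⟨v, rfl⟩)
      (Submodule.mem_sup_right ⟨v, rfl⟩)
  exact le_trans (Submodule.finrank_mono hle)
    (Submodule.finrank_add_le_finrank_add_finrank _ _)

lemma sqrt_smul_vecMulVec (t : ℝ) (ht : 0 ≤ t) (u : Fin d → ℂ) :
    vecMulVec (((Real.sqrt t : ℝ) : ℂ) • u) (star (((Real.sqrt t : ℝ) : ℂ) • u))
      = ((t : ℝ) : ℂ) • vecMulVec u (star u) := by
  ext a b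
  simp only [vecMulVec_apply, Pi.smul_apply, Pi.star_apply, smul_eq_mul, star_mul',
    Complex.star_def, Complex.conj_ofReal]
  rw [show ((Real.sqrt t : ℝ) : ℂ) * u a * (((Real.sqrt t : ℝ) : ℂ) * (starRingEnd ℂ) (u b))
      = (((Real.sqrt t : ℝ) : ℂ) * ((Real.sqrt t : ℝ) : ℂ)) * (u a * (starRingEnd ℂ) (u b))
      by ring]
  rw [← Complex.ofReal_mul, Real.mul_self_sqrt ht]
  rfl

lemma spectral_sum {Q : Matrix (Fin d) (Fin d) ℂ} (hQ : Q.IsHermitian) :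
    Q = ∑ i, ((hQ.eigenvalues i : ℝ) : ℂ) •
      vecMulVec (fun a => (hQ.eigenvectorUnitary : Matrix (Fin d) (Fin d) ℂ) a i)
        (star fun a => (hQ.eigenvectorUnitary : Matrix (Fin d) (Fin d) ℂ) a i) := by
  conv_lhs => rw [hQ.spectral_theorem]
  ext a b
  simp only [Unitary.conjStarAlgAut_apply, mul_apply, diagonal_apply, Function.comp_apply, Matrix.sum_apply,
    Matrix.smul_apply, smul_eq_mul, vecMulVec_apply, Pi.star_apply, star_apply,
    mul_ite, mul_zero, ite_mul, zero_mul, Finset.sum_ite_eq, Finset.sum_ite_eq',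
    Finset.mem_univ, if_true]
  refine Finset.sum_congr rfl fun j _ => ?_
  simp only [Complex.star_def, Complex.real_smul, mul_one]
  rw [mul_right_comm]
  exact mul_comm _ _

end PhaseRetrievalAux

open PhaseRetrievalAux in
theorem frame_injective_iff_no_low_rank_hermitian
    (d n : ℕ) (φ : Fin n → (Fin d → ℂ)) :
    (∀ x y : Fin d → ℂ,
        (∀ k, star (φ k) ⬝ᵥ (vecMulVec x (star x)).mulVec (φ k) =
              star (φ k) ⬝ᵥ (vecMulVec y (star y)).mulVec (φ k)) →
        vecMulVec x (star x) = vecMulVec y (star y)) ↔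
    (∀ Q : Matrix (Fin d) (Fin d) ℂ, Q.IsHermitian →
        (∀ k, star (φ k) ⬝ᵥ Q.mulVec (φ k) = 0) → Q.rank ≤ 2 → Q = 0) := by
  constructor
  · intro hinj Q hQ hmeas hrank
    set U : Matrix (Fin d) (Fin d) ℂ := (hQ.eigenvectorUnitary : Matrix (Fin d) (Fin d) ℂ)
      with hU
    set lam := hQ.eigenvalues with hlam
    set u : Fin d → (Fin d → ℂ) := fun i a => U a i with hu
    have hdecomp : Q = ∑ i, ((lam i : ℝ) : ℂ) • vecMulVec (u i) (star (u i)) :=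
      spectral_sum hQ
    set c : Fin d → Fin n → ℂ := fun i k => star (u i) ⬝ᵥ φ k with hc
    -- measurement identity
    have hm : ∀ k, ∑ i, lam i * Complex.normSq (c i k) = 0 := by
      intro k
      have h0 := hmeas k
      rw [hdecomp] at h0
      have hexp : star (φ k) ⬝ᵥ (∑ i, ((lam i : ℝ) : ℂ) •
          vecMulVec (u i) (star (u i))).mulVec (φ k)
          = ∑ i, ((lam i : ℝ) : ℂ) * ((Complex.normSq (c i k) : ℝ) : ℂ) := by
        rw [show (∑ i, ((lam i : ℝ) : ℂ) • vecMulVec (u i) (star (u i))) *ᵥ φ k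
            = ∑ i, (((lam i : ℝ) : ℂ) • vecMulVec (u i) (star (u i))) *ᵥ φ k by
          ext a
          simp only [mulVec, dotProduct, Matrix.sum_apply, Finset.sum_mul, Finset.sum_apply]
          exact Finset.sum_comm]
        rw [show (star (φ k) ⬝ᵥ ∑ i, (((lam i : ℝ) : ℂ) • vecMulVec (u i) (star (u i))) *ᵥ φ k)
            = ∑ i, star (φ k) ⬝ᵥ ((((lam i : ℝ) : ℂ) • vecMulVec (u i) (star (u i))) *ᵥ φ k) by
          simp only [dotProduct, Finset.sum_apply, Finset.mul_sum]
          exact Finset.sum_comm]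
        refine Finset.sum_congr rfl fun i _ => ?_
        rw [Matrix.smul_mulVec, dotProduct_smul, smul_eq_mul, meas_vecMulVec]
      rw [hexp] at h0
      have : ((∑ i, lam i * Complex.normSq (c i k) : ℝ) : ℂ) = 0 := by
        push_cast
        exact h0
      exact_mod_cast this
    -- key lemma: if all terms of i vanish, the i-th summand is zero
    have key : ∀ i, (∀ k, lam i * Complex.normSq (c i k) = 0) →
        ((lam i : ℝ) : ℂ) • vecMulVec (u i) (star (u i)) = 0 := by
      intro i hi
      by_cases h0 : lam i = 0
      · simp [h0]
      · have hck : ∀ k, c i k = 0 := by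
          intro k
          have := hi k
          have hns : Complex.normSq (c i k) = 0 := by
            rcases mul_eq_zero.mp this with h | h
            · exact absurd h h0
            · exact h
          exact Complex.normSq_eq_zero.mp hns
        have heq := hinj (u i) 0 (by
          intro k
          rw [meas_vecMulVec, meas_vecMulVec]
          simp [show star (u i) ⬝ᵥ φ k = 0 from hck k])
        rw [heq]
        ext a b
        simp [vecMulVec_apply]
    by_cases hpos : ∃ p, 0 < lam p
    · by_cases hneg : ∃ q, lam q < 0
      · -- mixed case
        obtain ⟨p, hp⟩ := hpos
        obtain ⟨q, hq⟩ := hneg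
        have hpq : p ≠ q := fun h => by rw [h] at hp; linarith
        have hzero : ∀ i, i ≠ p → i ≠ q → lam i = 0 := by
          intro i hip hiq
          by_contra hne
          have h3 : ({p, q, i} : Finset (Fin d)).card = 3 := by
            rw [Finset.card_insert_of_notMem (by simp [hpq, Ne.symm hip]),
              Finset.card_insert_of_notMem (by simp [Ne.symm hiq]),
              Finset.card_singleton]
          have hsub : ({p, q, i} : Finset (Fin d))
              ⊆ Finset.univ.filter (fun j => hQ.eigenvalues j ≠ 0) := by
            intro j hj
            simp only [Finset.mem_insert, Finset.mem_singleton] at hj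
            simp only [Finset.mem_filter, Finset.mem_univ, true_and]
            rcases hj with rfl | rfl | rfl
            · exact ne_of_gt hp
            · exact ne_of_lt hq
            · exact hne
          have hcard := Finset.card_le_card hsub
          rw [h3] at hcard
          have hr2 := hrank
          rw [hQ.rank_eq_card_non_zero_eigs, Fintype.card_subtype] at hr2
          omega
        set x : Fin d → ℂ := ((Real.sqrt (lam p) : ℝ) : ℂ) • u p with hx
        set y : Fin d → ℂ := ((Real.sqrt (-lam q) : ℝ) : ℂ) • u q with hy
        have hxx : vecMulVec x (star x) = ((lam p : ℝ) : ℂ) • vecMulVec (u p) (star (u p)) :=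
          sqrt_smul_vecMulVec (lam p) (le_of_lt hp) (u p)
        have hyy : vecMulVec y (star y) = ((-lam q : ℝ) : ℂ) • vecMulVec (u q) (star (u q)) :=
          sqrt_smul_vecMulVec (-lam q) (by linarith) (u q)
        have hQxy : Q = vecMulVec x (star x) - vecMulVec y (star y) := by
          rw [hdecomp, hxx, hyy]
          rw [← Finset.sum_subset (Finset.subset_univ ({p, q} : Finset (Fin d)))
            (fun i _ hi => by
              simp only [Finset.mem_insert, Finset.mem_singleton, not_or] at hi
              rw [hzero i hi.1 hi.2]
              simp)]
          rw [Finset.sum_insert (by simp [hpq]), Finset.sum_singleton]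
          rw [Complex.ofReal_neg, neg_smul, sub_eq_add_neg, neg_neg]
        have hmeq : ∀ k, star (φ k) ⬝ᵥ (vecMulVec x (star x)).mulVec (φ k)
            = star (φ k) ⬝ᵥ (vecMulVec y (star y)).mulVec (φ k) := by
          intro k
          have h := hmeas k
          rw [hQxy, sub_mulVec, dotProduct_sub] at h
          exact sub_eq_zero.mp h
        have hfin := hinj x y hmeq
        rw [hQxy, hfin, sub_self]
      ·
        push_neg at hneg
        have hterm : ∀ k, ∀ i ∈ Finset.univ, lam i * Complex.normSq (c i k) = 0 := by
          intro k
          refine (Finset.sum_eq_zero_iff_of_nonneg ?_).mp (hm k)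
          intro i _
          exact mul_nonneg (hneg i) (Complex.normSq_nonneg _)
        rw [hdecomp]
        exact Finset.sum_eq_zero fun i _ =>
          key i fun k => hterm k i (Finset.mem_univ i)
    · -- no positive eigenvalue
      push_neg at hpos
      have hterm : ∀ k, ∀ i ∈ Finset.univ, lam i * Complex.normSq (c i k) = 0 := by
        intro k
        refine (Finset.sum_eq_zero_iff_of_nonpos ?_).mp (hm k)
        intro i _
        exact mul_nonpos_of_nonpos_of_nonneg (hpos i) (Complex.normSq_nonneg _)
      rw [hdecomp]
      exact Finset.sum_eq_zero fun i _ =>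
        key i fun k => hterm k i (Finset.mem_univ i)
  · intro hQprop x y hxy
    have h1 : (vecMulVec x (star x) - vecMulVec y (star y)).IsHermitian :=
      (vecMulVec_isHermitian x).sub (vecMulVec_isHermitian y)
    have h2 : ∀ k, star (φ k) ⬝ᵥ (vecMulVec x (star x) - vecMulVec y (star y)).mulVec (φ k)
        = 0 := by
      intro k
      rw [sub_mulVec, dotProduct_sub, hxy k, sub_self]
    have h3 : (vecMulVec x (star x) - vecMulVec y (star y)).rank ≤ 2 :=
      (rank_sub_le' _ _).trans
        (add_le_add (PhaseRetrievalAux.rank_vecMulVec_le _ _) (PhaseRetrievalAux.rank_vecMulVec_le _ _))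
    have := hQprop _ h1 h2 h3
    exact sub_eq_zero.mp this
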